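/- Let δ ∈ (0,1), let X ⊆ S be a homogeneous δ-solution of (VCP) with approximate upper image P_X := conv(F[X]) + C, and let y ∈ bd P_X. Then at least one of the following holds: (i) there exists n ∈ bd 𝒫 such that, setting q := d((n,1)/‖(n,1)‖, cone{(y,1)}), one has q·√(‖y‖² + 1) < 1 and d(y, bd 𝒫) ≤ q(‖y‖² + 1)/(√(1 − q²) − q‖y‖); or (ii) y ≠ 0 and d(y/‖y‖, 0⁺𝒫) ≤ (‖(y,1)‖/‖y‖)·δ. -/

import Mathlib

open Metric Set Pointwise

noncomputable section

/-- `ℝ^m` as a Euclidean space. -/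
abbrev Em (m : ℕ) := EuclideanSpace ℝ (Fin m)

/-- `ℝ^(m+1)` realized as the L²-product `ℝ^m × ℝ`. -/
abbrev Em1 (m : ℕ) := WithLp 2 (Em m × ℝ)

/-- The conic hull: all finite nonnegative combinations of elements of `M`. -/
def coneHull {V : Type*} [AddCommMonoid V] [Module ℝ V] (M : Set V) : Set V :=
  {x | ∃ (k : ℕ) (c : Fin k → ℝ) (v : Fin k → V),
    (∀ i, 0 ≤ c i) ∧ (∀ i, v i ∈ M) ∧ x = ∑ i, c i • v i}

/-- The ray `cone {v} = {λ • v : λ ≥ 0}`. -/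
def ray {V : Type*} [AddCommMonoid V] [Module ℝ V] (v : V) : Set V :=
  {x | ∃ l : ℝ, 0 ≤ l ∧ x = l • v}

/-- The vector `(y, 1) ∈ ℝ^(m+1)` obtained by appending a last coordinate `1` to `y`. -/
def lift1 {m : ℕ} (y : Em m) : Em1 m := (WithLp.equiv 2 (Em m × ℝ)).symm (y, 1)

/-- The homogenization `hom Z = cl (cone (Z × {1}))` of a set `Z ⊆ ℝ^m`. -/
def homog {m : ℕ} (Z : Set (Em m)) : Set (Em1 m) := closure (coneHull (lift1 '' Z))

/-- The truncated Hausdorff distance `d_tH(K₁, K₂) = d_H(K₁ ∩ 𝔹, K₂ ∩ 𝔹)`. -/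
def dtH {V : Type*} [NormedAddCommGroup V] (K₁ K₂ : Set V) : ℝ :=
  hausdorffDist (K₁ ∩ closedBall 0 1) (K₂ ∩ closedBall 0 1)

/-- The recession cone `0⁺Z = {z : x + λz ∈ Z for all x ∈ Z, λ ≥ 0}`. -/
def recCone {V : Type*} [AddCommMonoid V] [Module ℝ V] (Z : Set V) : Set V :=
  {z | ∀ x ∈ Z, ∀ r : ℝ, 0 ≤ r → x + r • z ∈ Z}

section AuxLemmas

open Filter
open scoped RealInnerProductSpace

set_option maxHeartbeats 1000000

/-- Horizontal embedding `x ↦ (x, 0)`. -/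
def hor {m : ℕ} (y : Em m) : Em1 m := (WithLp.equiv 2 (Em m × ℝ)).symm (y, 0)

lemma inner_lift1 {m : ℕ} (a b : Em m) : ⟪lift1 a, lift1 b⟫ = ⟪a, b⟫ + 1 := by
  simp [lift1, WithLp.prod_inner_apply]

lemma inner_hor_lift1 {m : ℕ} (a b : Em m) : ⟪hor a, lift1 b⟫ = ⟪a, b⟫ := by
  simp [lift1, hor, WithLp.prod_inner_apply]

lemma inner_hor_hor {m : ℕ} (a b : Em m) : ⟪hor a, hor b⟫ = ⟪a, b⟫ := by
  simp [hor, WithLp.prod_inner_apply]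

lemma norm_lift1_sq {m : ℕ} (a : Em m) : ‖lift1 a‖ ^ 2 = ‖a‖ ^ 2 + 1 := by
  rw [← real_inner_self_eq_norm_sq, inner_lift1, real_inner_self_eq_norm_sq]

lemma norm_lift1 {m : ℕ} (a : Em m) : ‖lift1 a‖ = Real.sqrt (‖a‖ ^ 2 + 1) := by
  rw [← norm_lift1_sq, Real.sqrt_sq (norm_nonneg _)]

lemma one_le_norm_lift1 {m : ℕ} (a : Em m) : 1 ≤ ‖lift1 a‖ := by
  nlinarith [norm_lift1_sq a, norm_nonneg (lift1 a), sq_nonneg ‖a‖]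

lemma norm_lift1_sub {m : ℕ} (a b : Em m) : ‖lift1 a - lift1 b‖ = ‖a - b‖ := by
  have h : ‖lift1 a - lift1 b‖ ^ 2 = ‖a - b‖ ^ 2 := by
    rw [norm_sub_sq_real, norm_sub_sq_real, inner_lift1, norm_lift1_sq, norm_lift1_sq]; ring
  have := norm_nonneg (lift1 a - lift1 b); have := norm_nonneg (a - b); nlinarith

lemma norm_hor {m : ℕ} (a : Em m) : ‖hor a‖ = ‖a‖ := by
  have h := inner_hor_hor a a
  rw [real_inner_self_eq_norm_sq, real_inner_self_eq_norm_sq] at h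
  nlinarith [norm_nonneg (hor a), norm_nonneg a]

lemma lift1_combo {m : ℕ} (a b : ℝ) (hab : a + b = 1) (x₁ x₂ : Em m) :
    lift1 (a • x₁ + b • x₂) = a • lift1 x₁ + b • lift1 x₂ := by
  simp only [lift1, WithLp.equiv_symm_apply, ← WithLp.toLp_smul, ← WithLp.toLp_add, Prod.smul_mk,
    Prod.mk_add_mk, smul_eq_mul, mul_one, hab]

lemma lift1_smul_aux {m : ℕ} (c : ℝ) (hc : c ≠ 0) (u : Em m) :
    c⁻¹ • lift1 (c • u) = hor u + c⁻¹ • lift1 0 := by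
  simp only [lift1, hor, WithLp.equiv_symm_apply, ← WithLp.toLp_smul, ← WithLp.toLp_add, Prod.smul_mk,
    Prod.mk_add_mk, smul_smul, inv_mul_cancel₀ hc, one_smul, smul_eq_mul, mul_one, smul_zero,
    add_zero, zero_add]

lemma zero_mem_coneHull {V : Type*} [AddCommMonoid V] [Module ℝ V] (M : Set V) :
    (0 : V) ∈ coneHull M :=
  ⟨0, fun i => 0, fun i => i.elim0, fun i => i.elim0, fun i => i.elim0, by simp⟩

lemma smul_mem_coneHull {V : Type*} [AddCommMonoid V] [Module ℝ V] {M : Set V} {c : ℝ}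
    (hc : 0 ≤ c) {v : V} (hv : v ∈ M) : c • v ∈ coneHull M :=
  ⟨1, fun _ => c, fun _ => v, fun _ => hc, fun _ => hv, by simp⟩

lemma ray_nonempty {V : Type*} [AddCommMonoid V] [Module ℝ V] (v : V) : (ray v).Nonempty :=
  ⟨0, 0, le_refl 0, (zero_smul ℝ v).symm⟩

lemma continuous_lift1 {m : ℕ} : Continuous (lift1 (m := m)) := by
  refine (LipschitzWith.of_dist_le_mul (K := 1) fun a b => ?_).continuous
  rw [dist_eq_norm, dist_eq_norm, norm_lift1_sub]
  simp

lemma tendsto_eps : Tendsto (fun k : ℕ => (1:ℝ)/(k+1)) atTop (nhds 0) :=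
  tendsto_one_div_add_atTop_nhds_zero_nat

lemma mem_recCone_of_ray {m : ℕ} {Z : Set (Em m)} (hZcl : IsClosed Z) (hZconv : Convex ℝ Z)
    {p d : Em m} (hray : ∀ s : ℝ, 0 ≤ s → p + s • d ∈ Z) : d ∈ recCone Z := by
  intro x hx t ht
  have hmem : ∀ k : ℕ, (1 - (1:ℝ)/(k+1)) • x + ((1:ℝ)/(k+1)) • p + t • d ∈ Z := by
    intro k
    have hk : ((k:ℝ)+1) ≠ 0 := by positivity
    have he0 : (0:ℝ) ≤ 1/(k+1) := by positivity
    have he1 : (1:ℝ)/(k+1) ≤ 1 := by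
      rw [div_le_one (by positivity)]; linarith [Nat.cast_nonneg (α := ℝ) k]
    have hp := hray (((k:ℝ)+1)*t) (by positivity)
    have hab : (1 - (1:ℝ)/(k+1)) + (1:ℝ)/(k+1) = 1 := by ring
    have h1 := hZconv (a := 1 - (1:ℝ)/(k+1)) (b := (1:ℝ)/(k+1)) hx hp (by linarith) he0 hab
    have : (1 - (1:ℝ)/(k+1)) • x + ((1:ℝ)/(k+1)) • (p + (((k:ℝ)+1)*t) • d)
        = (1 - (1:ℝ)/(k+1)) • x + ((1:ℝ)/(k+1)) • p + t • d := by
      rw [smul_add, smul_smul, ← add_assoc]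
      congr 2
      field_simp
    rwa [this] at h1
  have htend : Tendsto (fun k : ℕ => (1 - (1:ℝ)/(k+1)) • x + ((1:ℝ)/(k+1)) • p + t • d)
      atTop (nhds (x + t • d)) := by
    have h1 : Tendsto (fun k : ℕ => (1 - (1:ℝ)/(k+1))) atTop (nhds 1) := by
      simpa using tendsto_const_nhds.sub tendsto_eps
    have := ((h1.smul_const x).add (tendsto_eps.smul_const p)).add
      (tendsto_const_nhds (x := t • d))
    simpa using this
  exact hZcl.mem_of_tendsto htend (Eventually.of_forall hmem)

lemma supporting_hyperplane {m : ℕ} {s : Set (Em m)} (hconv : Convex ℝ s)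
    (h0 : (0 : Em m) ∈ frontier s) : ∃ w : Em m, w ≠ 0 ∧ ∀ z ∈ s, ⟪w, z⟫ ≤ 0 := by
  by_cases hne : (interior s).Nonempty
  · have h0ni : (0 : Em m) ∉ interior s := h0.2
    obtain ⟨f, hf⟩ := geometric_hahn_banach_open_point hconv.interior isOpen_interior h0ni
    obtain ⟨a, ha⟩ := hne
    have hfa : f a < 0 := by simpa using hf a ha
    refine ⟨(InnerProductSpace.toDual ℝ (Em m)).symm f, ?_, ?_⟩
    · intro hw
      have : f a = 0 := by
        have := InnerProductSpace.toDual_symm_apply (𝕜 := ℝ) (E := Em m) (x := a) (y := f)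
        rw [hw] at this
        simpa using this.symm
      linarith
    · intro z hz
      rw [InnerProductSpace.toDual_symm_apply]
      have hcombo : ∀ k : ℕ, ((1:ℝ)/(k+1)) * f a + (1 - (1:ℝ)/(k+1)) * f z < 0 := by
        intro k
        have he0 : (0:ℝ) < 1/(k+1) := by positivity
        have he1 : (1:ℝ)/(k+1) ≤ 1 := by
          rw [div_le_one (by positivity)]; linarith [Nat.cast_nonneg (α := ℝ) k]
        have hmem := hconv.combo_interior_closure_mem_interior (a := (1:ℝ)/(k+1))
          (b := 1 - (1:ℝ)/(k+1)) ha (subset_closure hz) he0 (by linarith) (by ring)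
        have := hf _ hmem
        simpa [map_add, map_smul, smul_eq_mul] using this
      have htend : Tendsto (fun k : ℕ => ((1:ℝ)/(k+1)) * f a + (1 - (1:ℝ)/(k+1)) * f z)
          atTop (nhds (f z)) := by
        have h1 : Tendsto (fun k : ℕ => (1 - (1:ℝ)/(k+1))) atTop (nhds 1) := by
          simpa using tendsto_const_nhds.sub tendsto_eps
        have := (tendsto_eps.mul_const (f a)).add (h1.mul_const (f z))
        simpa using this
      exact le_of_tendsto htend (Eventually.of_forall fun k => (hcombo k).le)
  · have haff : affineSpan ℝ s ≠ ⊤ := fun h =>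
      hne (hconv.interior_nonempty_iff_affineSpan_eq_top.mpr h)
    have hsne : s.Nonempty := by
      by_contra h
      rw [not_nonempty_iff_eq_empty] at h
      simp [h] at h0
    have hclspan : IsClosed ((affineSpan ℝ s : Set (Em m))) :=
      (affineSpan ℝ s).closed_of_finiteDimensional
    have h0span : (0 : Em m) ∈ affineSpan ℝ s := by
      have h0c : (0 : Em m) ∈ closure s := h0.1
      exact closure_minimal (subset_affineSpan ℝ s) hclspan h0c
    have hD : ∀ z ∈ s, z ∈ (affineSpan ℝ s).direction := by
      intro z hz
      have := AffineSubspace.vsub_mem_direction (subset_affineSpan ℝ s hz) h0span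
      simpa using this
    have hDne : (affineSpan ℝ s).direction ≠ ⊤ := by
      intro hD2
      apply haff
      rw [eq_top_iff]
      intro v _
      have : v +ᵥ (0 : Em m) ∈ affineSpan ℝ s :=
        AffineSubspace.vadd_mem_of_mem_direction (by rw [hD2]; trivial) h0span
      simpa using this
    have horth : ((affineSpan ℝ s).direction)ᗮ ≠ ⊥ := fun hbot =>
      hDne (Submodule.orthogonal_eq_bot_iff.mp hbot)
    obtain ⟨w, hwmem, hw0⟩ := (Submodule.ne_bot_iff _).mp horth
    refine ⟨w, hw0, fun z hz => ?_⟩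
    have := (Submodule.mem_orthogonal _ w).mp hwmem z (hD z hz)
    rw [real_inner_comm] at this
    rw [this]

section raydist
variable {E : Type*} [NormedAddCommGroup E] [InnerProductSpace ℝ E]

lemma ray_quad (u v : E) (hu : ‖u‖ = 1) (l : ℝ) :
    ‖u - l • v‖ ^ 2 = 1 - 2*l*⟪u, v⟫ + l^2*‖v‖^2 := by
  rw [norm_sub_sq_real, real_inner_smul_right, norm_smul, Real.norm_eq_abs, mul_pow, sq_abs, hu]
  ring

lemma infDist_ray_ge_one {u v : E} (hu : ‖u‖ = 1) (hneg : ⟪u, v⟫ ≤ 0) :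
    1 ≤ infDist u (ray v) := by
  refine le_of_not_gt fun hlt => ?_
  obtain ⟨z, hz, hdz⟩ := (infDist_lt_iff (ray_nonempty v)).mp hlt
  obtain ⟨l, hl, rfl⟩ := hz
  have hd2 : dist u (l • v) ^ 2 = 1 - 2*l*⟪u, v⟫ + l^2*‖v‖^2 := by
    rw [dist_eq_norm]; exact ray_quad u v hu l
  nlinarith [mul_nonneg hl (neg_nonneg.mpr hneg), sq_nonneg (l*‖v‖),
    dist_nonneg (x := u) (y := l • v)]

lemma infDist_ray_eq {u v : E} (hu : ‖u‖ = 1) (hpos : 0 < ⟪u, v⟫) :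
    infDist u (ray v) = Real.sqrt (1 - (⟪u, v⟫/‖v‖)^2) := by
  have hvpos : 0 < ‖v‖ := by
    rcases eq_or_lt_of_le (norm_nonneg v) with h | h
    · exfalso
      have : v = 0 := by rwa [eq_comm, norm_eq_zero] at h
      rw [this, inner_zero_right] at hpos
      exact lt_irrefl 0 hpos
    · exact h
  have hcs : ⟪u, v⟫ ≤ ‖v‖ := by
    have := real_inner_le_norm u v
    rwa [hu, one_mul] at this
  have h1c : 0 ≤ 1 - (⟪u, v⟫/‖v‖)^2 := by
    have h1 : ⟪u, v⟫/‖v‖ ≤ 1 := by rw [div_le_one hvpos]; exact hcs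
    have h2 : 0 ≤ ⟪u, v⟫/‖v‖ := by positivity
    nlinarith
  refine le_antisymm ?_ ?_
  · have hmem : (⟪u, v⟫/‖v‖^2) • v ∈ ray v := ⟨_, by positivity, rfl⟩
    have hle := infDist_le_dist_of_mem (x := u) hmem
    have hd2 : dist u ((⟪u, v⟫/‖v‖^2) • v) ^ 2 = 1 - (⟪u, v⟫/‖v‖)^2 := by
      rw [dist_eq_norm, ray_quad u v hu]
      field_simp
      ring
    calc infDist u (ray v) ≤ dist u ((⟪u, v⟫/‖v‖^2) • v) := hle
      _ = Real.sqrt (1 - (⟪u, v⟫/‖v‖)^2) := by rw [← hd2, Real.sqrt_sq dist_nonneg]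
  · refine le_of_not_gt fun hlt => ?_
    obtain ⟨z, hz, hdz⟩ := (infDist_lt_iff (ray_nonempty v)).mp hlt
    obtain ⟨l, hl, rfl⟩ := hz
    have hd2 : dist u (l • v) ^ 2 = 1 - 2*l*⟪u, v⟫ + l^2*‖v‖^2 := by
      rw [dist_eq_norm]; exact ray_quad u v hu l
    have hident : 1 - 2*l*⟪u, v⟫ + l^2*‖v‖^2
        = (1 - (⟪u, v⟫/‖v‖)^2) + (l*‖v‖ - ⟪u, v⟫/‖v‖)^2 := by
      field_simp
      ring
    have hsle : Real.sqrt (1 - (⟪u, v⟫/‖v‖)^2) ≤ dist u (l • v) := by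
      nlinarith [Real.sq_sqrt h1c, Real.sqrt_nonneg (1 - (⟪u, v⟫/‖v‖)^2),
        sq_nonneg (l*‖v‖ - ⟪u, v⟫/‖v‖), dist_nonneg (x := u) (y := l • v)]
    linarith

lemma aux_cs (mm b τ : E) (hmτ : ⟪mm, τ⟫ = 1) (hbτ : ⟪b, τ⟫ = 1) (hτ1 : ‖τ‖ = 1)
    (hb : 0 < ‖b‖) :
    (⟪mm, b⟫ - ‖b‖^2)^2 ≤ (‖mm‖^2*‖b‖^2 - ⟪mm, b⟫^2)*(‖b‖^2 - 1) := by
  have hcs := real_inner_mul_inner_self_le (‖b‖^2 • mm - ⟪mm, b⟫ • b) (b - ‖b‖^2 • τ)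
  have hbm : ⟪b, mm⟫ = ⟪mm, b⟫ := real_inner_comm mm b
  have hτm : ⟪τ, mm⟫ = 1 := by rw [real_inner_comm]; exact hmτ
  have hτb : ⟪τ, b⟫ = 1 := by rw [real_inner_comm]; exact hbτ
  have hττ : ⟪τ, τ⟫ = 1 := by rw [real_inner_self_eq_norm_sq, hτ1]; norm_num
  have hbb : ⟪b, b⟫ = ‖b‖^2 := real_inner_self_eq_norm_sq b
  have hmm : ⟪mm, mm⟫ = ‖mm‖^2 := real_inner_self_eq_norm_sq mm
  simp only [inner_sub_left, inner_sub_right, real_inner_smul_left, real_inner_smul_right,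
    hbm, hτm, hτb, hττ, hbb, hmm, hmτ, hbτ] at hcs
  have hY4 : (0:ℝ) < ‖b‖^4 := by positivity
  nlinarith [hcs, hY4, sq_nonneg ‖b‖]
end raydist

lemma real_core {q r Y N u d : ℝ} (hY2 : Y^2 = r^2+1) (hY1 : 1 ≤ Y) (hN1 : 1 ≤ N)
    (hr : 0 ≤ r) (hq0 : 0 ≤ q) (hq : q*Y < 1) (hu : 0 < u)
    (hq2 : N^2*q^2 = N^2 - u^2) (habs : |u - Y| ≤ N*q*r)
    (hd2 : d^2 = N^2*q^2 + (u - Y)^2) (hd0 : 0 ≤ d) :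
    d ≤ q*(r^2+1)/(Real.sqrt (1 - q^2) - q*r) := by
  have hYpos : (0:ℝ) < Y := by linarith
  have hNpos : (0:ℝ) < N := by linarith
  have hsqc : Real.sqrt (1 - q^2) = u/N := by
    have h1 : 1 - q^2 = (u/N)^2 := by
      rw [div_pow, eq_div_iff (by positivity)]
      nlinarith [hq2]
    rw [h1, Real.sqrt_sq (by positivity)]
  have hqY : 0 ≤ q*Y := by positivity
  have hql2 : q^2*Y^2 < 1 := by
    have h1 : q*Y*(q*Y) ≤ q*Y*1 := mul_le_mul_of_nonneg_left hq.le hqY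
    nlinarith [h1, hq]
  have hkey : r*N < u*Y := by
    have h3 : (r*N)^2 < (u*Y)^2 := by
      nlinarith [mul_lt_mul_of_pos_left hql2 (by positivity : (0:ℝ) < N^2)]
    nlinarith [mul_pos hu hYpos, mul_nonneg hr hNpos.le]
  have hden' : N*q*r < u := by
    nlinarith [hkey, mul_nonneg (mul_nonneg hr hNpos.le) (by linarith : (0:ℝ) ≤ 1 - q*Y), hYpos]
  have hden : 0 < u/N - q*r := by
    rw [sub_pos, lt_div_iff₀ hNpos]
    nlinarith [hden']
  have habs' := abs_le.mp habs
  have key1 : d ≤ N*q*Y := by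
    have h5 : d^2 ≤ (N*q*Y)^2 := by
      have hsq : (u - Y)^2 ≤ (N*q*r)^2 :=
        sq_le_sq' (by linarith [habs'.1]) habs'.2
      have e1 : (N*q)^2*Y^2 = (N*q)^2*(r^2+1) := by rw [hY2]
      nlinarith [hd2, hsq, e1]
    nlinarith [mul_nonneg (mul_nonneg hNpos.le hq0) hYpos.le]
  have step : d*(u - N*q*r) ≤ q*Y^2*N := by
    have s1 : d*(u - N*q*r) ≤ (N*q*Y)*(u - N*q*r) :=
      mul_le_mul_of_nonneg_right key1 (by linarith)
    have s2 : (N*q*Y)*(u - N*q*r) ≤ (N*q*Y)*Y := by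
      apply mul_le_mul_of_nonneg_left _ (by positivity)
      linarith [habs'.2]
    calc d*(u - N*q*r) ≤ (N*q*Y)*(u - N*q*r) := s1
      _ ≤ (N*q*Y)*Y := s2
      _ = q*Y^2*N := by ring
  rw [hsqc, le_div_iff₀ hden]
  have heq : d*(u/N - q*r) = d*(u - N*q*r)/N := by
    rw [eq_div_iff hNpos.ne']
    field_simp
  rw [heq, div_le_iff₀ hNpos, ← hY2]
  linarith [step]
lemma trig_bound {m : ℕ} (y nn : Em m)
    (hq : infDist (‖lift1 nn‖⁻¹ • lift1 nn) (ray (lift1 y)) * Real.sqrt (‖y‖ ^ 2 + 1) < 1) :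
    dist y nn ≤ infDist (‖lift1 nn‖⁻¹ • lift1 nn) (ray (lift1 y)) * (‖y‖ ^ 2 + 1) /
      (Real.sqrt (1 - infDist (‖lift1 nn‖⁻¹ • lift1 nn) (ray (lift1 y)) ^ 2)
        - infDist (‖lift1 nn‖⁻¹ • lift1 nn) (ray (lift1 y)) * ‖y‖) := by
  have hN1 : 1 ≤ ‖lift1 nn‖ := one_le_norm_lift1 nn
  have hY1 : 1 ≤ ‖lift1 y‖ := one_le_norm_lift1 y
  have hNpos : 0 < ‖lift1 nn‖ := by linarith
  have hYpos : 0 < ‖lift1 y‖ := by linarith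
  have hnn0 : lift1 nn ≠ 0 := by
    intro h; rw [h, norm_zero] at hNpos; exact lt_irrefl 0 hNpos
  have hu1 : ‖(‖lift1 nn‖⁻¹ • lift1 nn)‖ = 1 := norm_smul_inv_norm hnn0
  rw [← norm_lift1 y] at hq
  have hip : ⟪‖lift1 nn‖⁻¹ • lift1 nn, lift1 y⟫ = ‖lift1 nn‖⁻¹ * ⟪lift1 nn, lift1 y⟫ :=
    real_inner_smul_left _ _ _
  have hq0 : 0 ≤ infDist (‖lift1 nn‖⁻¹ • lift1 nn) (ray (lift1 y)) := infDist_nonneg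
  have hβpos : 0 < ⟪lift1 nn, lift1 y⟫ := by
    by_contra h
    push_neg at h
    have hneg : ⟪‖lift1 nn‖⁻¹ • lift1 nn, lift1 y⟫ ≤ 0 := by
      rw [hip]
      exact mul_nonpos_of_nonneg_of_nonpos (by positivity) h
    have h1 := infDist_ray_ge_one hu1 hneg
    nlinarith
  have hqeq := infDist_ray_eq hu1 (by rw [hip]; exact mul_pos (by positivity) hβpos)
  have hcs1 : ⟪‖lift1 nn‖⁻¹ • lift1 nn, lift1 y⟫ ≤ ‖lift1 y‖ := by
    have := real_inner_le_norm (‖lift1 nn‖⁻¹ • lift1 nn) (lift1 y)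
    rwa [hu1, one_mul] at this
  have h1c : 0 ≤ 1 - (⟪‖lift1 nn‖⁻¹ • lift1 nn, lift1 y⟫/‖lift1 y‖)^2 := by
    have h1 : ⟪‖lift1 nn‖⁻¹ • lift1 nn, lift1 y⟫/‖lift1 y‖ ≤ 1 := by
      rw [div_le_one hYpos]; exact hcs1
    have h2 : 0 ≤ ⟪‖lift1 nn‖⁻¹ • lift1 nn, lift1 y⟫/‖lift1 y‖ := by
      rw [hip]; positivity
    nlinarith
  have hq2 : ‖lift1 nn‖^2 * infDist (‖lift1 nn‖⁻¹ • lift1 nn) (ray (lift1 y)) ^2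
      = ‖lift1 nn‖^2 - (⟪lift1 nn, lift1 y⟫/‖lift1 y‖)^2 := by
    rw [hqeq, Real.sq_sqrt h1c, hip]
    field_simp
  have haux := aux_cs (lift1 nn) (lift1 y) (lift1 0)
    (by rw [inner_lift1]; simp) (by rw [inner_lift1]; simp)
    (by rw [norm_lift1]; simp) hYpos
  have hr2 : ‖lift1 y‖^2 = ‖y‖^2 + 1 := norm_lift1_sq y
  have habs : |⟪lift1 nn, lift1 y⟫/‖lift1 y‖ - ‖lift1 y‖|
      ≤ ‖lift1 nn‖ * infDist (‖lift1 nn‖⁻¹ • lift1 nn) (ray (lift1 y)) * ‖y‖ := by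
    have hsq : (⟪lift1 nn, lift1 y⟫/‖lift1 y‖ - ‖lift1 y‖)^2
        ≤ (‖lift1 nn‖ * infDist (‖lift1 nn‖⁻¹ • lift1 nn) (ray (lift1 y)) * ‖y‖)^2 := by
      have e1 : (⟪lift1 nn, lift1 y⟫/‖lift1 y‖ - ‖lift1 y‖)^2
          = (⟪lift1 nn, lift1 y⟫ - ‖lift1 y‖^2)^2/‖lift1 y‖^2 := by
        field_simp
      have e2 : (‖lift1 nn‖ * infDist (‖lift1 nn‖⁻¹ • lift1 nn) (ray (lift1 y)) * ‖y‖)^2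
          = (‖lift1 nn‖^2 - (⟪lift1 nn, lift1 y⟫/‖lift1 y‖)^2) * ‖y‖^2 := by
        rw [← hq2]; ring
      rw [e1, e2, div_le_iff₀ (by positivity)]
      have e3 : (‖lift1 nn‖^2 - (⟪lift1 nn, lift1 y⟫/‖lift1 y‖)^2) * ‖y‖^2 * ‖lift1 y‖^2
          = (‖lift1 nn‖^2*‖lift1 y‖^2 - ⟪lift1 nn, lift1 y⟫^2) * ‖y‖^2 := by
        field_simp
      rw [e3]
      have e4 : ‖y‖^2 = ‖lift1 y‖^2 - 1 := by rw [hr2]; ring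
      rw [e4]
      exact haux
    have hrhs : 0 ≤ ‖lift1 nn‖ * infDist (‖lift1 nn‖⁻¹ • lift1 nn) (ray (lift1 y)) * ‖y‖ := by
      positivity
    calc |⟪lift1 nn, lift1 y⟫/‖lift1 y‖ - ‖lift1 y‖|
        = Real.sqrt ((⟪lift1 nn, lift1 y⟫/‖lift1 y‖ - ‖lift1 y‖)^2) :=
          (Real.sqrt_sq_eq_abs _).symm
      _ ≤ Real.sqrt ((‖lift1 nn‖ * infDist (‖lift1 nn‖⁻¹ • lift1 nn) (ray (lift1 y)) * ‖y‖)^2) :=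
          Real.sqrt_le_sqrt hsq
      _ = _ := Real.sqrt_sq hrhs
  have hd2 : dist y nn ^2 = ‖lift1 nn‖^2 * infDist (‖lift1 nn‖⁻¹ • lift1 nn) (ray (lift1 y)) ^2
      + (⟪lift1 nn, lift1 y⟫/‖lift1 y‖ - ‖lift1 y‖)^2 := by
    have hdy : dist y nn = ‖lift1 nn - lift1 y‖ := by
      rw [dist_eq_norm, ← norm_lift1_sub y nn, norm_sub_rev]
    have hNy : ⟪lift1 nn, lift1 y⟫ = ⟪lift1 nn, lift1 y⟫ := rfl
    rw [hdy, norm_sub_sq_real, hq2]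
    have e5 : (⟪lift1 nn, lift1 y⟫/‖lift1 y‖ - ‖lift1 y‖)^2
        = (⟪lift1 nn, lift1 y⟫)^2/‖lift1 y‖^2 - 2*⟪lift1 nn, lift1 y⟫ + ‖lift1 y‖^2 := by
      field_simp
      ring
    rw [e5, div_pow]
    ring
  have hfinal := real_core (q := infDist (‖lift1 nn‖⁻¹ • lift1 nn) (ray (lift1 y)))
    (r := ‖y‖) (Y := ‖lift1 y‖) (N := ‖lift1 nn‖) (u := ⟪lift1 nn, lift1 y⟫/‖lift1 y‖)
    (d := dist y nn) hr2 hY1 hN1 (norm_nonneg y) hq0 hq (by positivity)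
    (by rw [hq2]) habs hd2 dist_nonneg
  exact hfinal

lemma gamma_small {m : ℕ} (y x : Em m) (hx : ‖y‖ * ‖lift1 x‖ < ⟪x, y⟫ + 1) :
    infDist (‖lift1 x‖⁻¹ • lift1 x) (ray (lift1 y)) * Real.sqrt (‖y‖^2 + 1) < 1 := by
  have hN1 : 1 ≤ ‖lift1 x‖ := one_le_norm_lift1 x
  have hY1 : 1 ≤ ‖lift1 y‖ := one_le_norm_lift1 y
  have hNpos : 0 < ‖lift1 x‖ := by linarith
  have hYpos : 0 < ‖lift1 y‖ := by linarith
  have hx0 : lift1 x ≠ 0 := by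
    intro h; rw [h, norm_zero] at hNpos; exact lt_irrefl 0 hNpos
  have hu1 : ‖(‖lift1 x‖⁻¹ • lift1 x)‖ = 1 := norm_smul_inv_norm hx0
  have hib : ⟪lift1 x, lift1 y⟫ = ⟪x, y⟫ + 1 := inner_lift1 x y
  have hrN : 0 ≤ ‖y‖ * ‖lift1 x‖ := by positivity
  have hipos : 0 < ⟪‖lift1 x‖⁻¹ • lift1 x, lift1 y⟫ := by
    rw [real_inner_smul_left, hib]
    exact mul_pos (by positivity) (by linarith)
  have hqeq := infDist_ray_eq hu1 hipos
  rw [← norm_lift1 y, hqeq]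
  have hcs1 : ⟪‖lift1 x‖⁻¹ • lift1 x, lift1 y⟫ ≤ ‖lift1 y‖ := by
    have := real_inner_le_norm (‖lift1 x‖⁻¹ • lift1 x) (lift1 y)
    rwa [hu1, one_mul] at this
  have h1c : 0 ≤ 1 - (⟪‖lift1 x‖⁻¹ • lift1 x, lift1 y⟫/‖lift1 y‖)^2 := by
    have h1 : ⟪‖lift1 x‖⁻¹ • lift1 x, lift1 y⟫/‖lift1 y‖ ≤ 1 := by
      rw [div_le_one hYpos]; exact hcs1
    have h2 : 0 ≤ ⟪‖lift1 x‖⁻¹ • lift1 x, lift1 y⟫/‖lift1 y‖ := by positivity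
    nlinarith
  have hkey : ‖y‖ < ⟪‖lift1 x‖⁻¹ • lift1 x, lift1 y⟫ := by
    rw [real_inner_smul_left, hib, inv_mul_eq_div, lt_div_iff₀ hNpos]
    linarith
  have hr2 : ‖lift1 y‖^2 = ‖y‖^2 + 1 := norm_lift1_sq y
  have hsq : (Real.sqrt (1 - (⟪‖lift1 x‖⁻¹ • lift1 x, lift1 y⟫/‖lift1 y‖)^2) * ‖lift1 y‖)^2
      < 1 := by
    rw [mul_pow, Real.sq_sqrt h1c]
    have e1 : (1 - (⟪‖lift1 x‖⁻¹ • lift1 x, lift1 y⟫/‖lift1 y‖)^2)*‖lift1 y‖^2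
        = ‖lift1 y‖^2 - ⟪‖lift1 x‖⁻¹ • lift1 x, lift1 y⟫^2 := by
      field_simp
    rw [e1, hr2]
    nlinarith [hkey, norm_nonneg y]
  have hnn : 0 ≤ Real.sqrt (1 - (⟪‖lift1 x‖⁻¹ • lift1 x, lift1 y⟫/‖lift1 y‖)^2) * ‖lift1 y‖ :=
    mul_nonneg (Real.sqrt_nonneg _) hYpos.le
  nlinarith [hsq, hnn]

lemma ray_in_gamma_aux {c r L : ℝ} (hc : 1 ≤ c) (hr : 0 < r) (hL0 : 0 ≤ L)
    (hL2 : L^2 = r^2*(c^2*r^2+1)) : L < c*r^2+1 := by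
  by_contra hcon
  push_neg at hcon
  have hcr : r^2*1 ≤ r^2*c := mul_le_mul_of_nonneg_left hc (sq_nonneg r)
  have hR : 0 < c*r^2+1 := by nlinarith [mul_pos hr hr]
  have h2 : (c*r^2+1)^2 ≤ L^2 := by nlinarith [hcon, hR]
  nlinarith [h2, hL2, hcr, mul_pos hr hr]

end AuxLemmas

section MainProof
open Filter
open scoped RealInnerProductSpace

set_option maxHeartbeats 1600000

/-- Any boundary point `y` of the approximate upper image `P_X` of a homogeneous
`δ`-solution either (i) has distance to `bd 𝒫` bounded by `α(‖y‖, q)` where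
`q = d((n,1)/‖(n,1)‖, cone{(y,1)})` for some `n ∈ bd 𝒫`, or (ii) `y/‖y‖` is within
`(‖(y,1)‖/‖y‖)·δ` of the recession cone `0⁺𝒫`. -/
theorem boundary_point_near_boundary_or_recession_direction
    {n m : ℕ} (S : Set (Em n)) (hSne : S.Nonempty) (hSconv : Convex ℝ S)
    (C : Set (Em m)) (hC0 : (0 : Em m) ∈ C)
    (hCcone : ∀ c ∈ C, ∀ r : ℝ, 0 ≤ r → r • c ∈ C)
    (hCconv : Convex ℝ C) (hCclosed : IsClosed C)
    (hCpointed : C ∩ (-C) ⊆ {0}) (hCnontrivial : C ≠ {0})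
    (F : Em n → Em m)
    (hFconv : ∀ x₁ x₂ : Em n, ∀ l : ℝ, l ∈ Set.Ioo (0:ℝ) 1 →
      l • F x₁ + (1 - l) • F x₂ - F (l • x₁ + (1 - l) • x₂) ∈ C)
    (δ : ℝ) (hδ : δ ∈ Set.Ioo (0:ℝ) 1)
    (X : Set (Em n)) (hXne : X.Nonempty) (hXS : X ⊆ S)
    (hXsol : dtH (homog (convexHull ℝ (F '' X) + C)) (homog (closure (F '' S + C))) ≤ δ)
    (y : Em m) (hy : y ∈ frontier (convexHull ℝ (F '' X) + C)) :
    (∃ nn ∈ frontier (closure (F '' S + C)), ∃ q : ℝ,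
      q = infDist (‖lift1 nn‖⁻¹ • lift1 nn) (ray (lift1 y)) ∧
      q * Real.sqrt (‖y‖ ^ 2 + 1) < 1 ∧
      infDist y (frontier (closure (F '' S + C))) ≤
        q * (‖y‖ ^ 2 + 1) / (Real.sqrt (1 - q ^ 2) - q * ‖y‖)) ∨
    (y ≠ 0 ∧
      infDist (‖y‖⁻¹ • y) (recCone (closure (F '' S + C))) ≤ (‖lift1 y‖ / ‖y‖) * δ) := by
  obtain ⟨hδ0, hδ1⟩ := hδ
  -- C is closed under addition
  have hCadd : ∀ c₁ ∈ C, ∀ c₂ ∈ C, c₁ + c₂ ∈ C := by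
    intro c₁ h₁ c₂ h₂
    have h3 := hCconv h₁ h₂ (by norm_num : (0:ℝ) ≤ 1/2) (by norm_num : (0:ℝ) ≤ 1/2)
      (by norm_num)
    have h4 := hCcone _ h3 2 (by norm_num)
    have he : (2:ℝ) • ((1/2 : ℝ) • c₁ + (1/2 : ℝ) • c₂) = c₁ + c₂ := by
      rw [smul_add, smul_smul, smul_smul]; norm_num
    rwa [he] at h4
  -- F '' S + C is convex
  have hACconv : Convex ℝ (F '' S + C) := by
    rintro p hp q hq a b ha hb hab
    rw [Set.mem_add] at hp hq
    obtain ⟨u₁, hu₁, c₁, hc₁, rfl⟩ := hp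
    obtain ⟨u₂, hu₂, c₂, hc₂, rfl⟩ := hq
    obtain ⟨x₁, hx₁, rfl⟩ := hu₁
    obtain ⟨x₂, hx₂, rfl⟩ := hu₂
    rcases eq_or_lt_of_le ha with ha0 | hapos
    · have hb1 : b = 1 := by linarith
      rw [← ha0, hb1, zero_smul, one_smul, zero_add]
      exact Set.add_mem_add ⟨x₂, hx₂, rfl⟩ hc₂
    rcases eq_or_lt_of_le hb with hb0 | hbpos
    · have ha1 : a = 1 := by linarith
      rw [← hb0, ha1, zero_smul, one_smul, add_zero]
      exact Set.add_mem_add ⟨x₁, hx₁, rfl⟩ hc₁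
    have hkey := hFconv x₁ x₂ a ⟨hapos, by linarith⟩
    rw [show (1:ℝ) - a = b by linarith] at hkey
    have hcc : (a • F x₁ + b • F x₂ - F (a•x₁ + b•x₂)) + (a • c₁ + b • c₂) ∈ C :=
      hCadd _ hkey _ (hCconv hc₁ hc₂ ha hb hab)
    have hmem : F (a•x₁ + b•x₂) ∈ F '' S := ⟨_, hSconv hx₁ hx₂ ha hb hab, rfl⟩
    have hsum := Set.add_mem_add hmem hcc
    have heq : F (a•x₁+b•x₂) + ((a • F x₁ + b • F x₂ - F (a•x₁ + b•x₂)) + (a • c₁ + b • c₂))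
        = a•(F x₁ + c₁) + b•(F x₂ + c₂) := by
      rw [smul_add, smul_add]; abel
    rwa [heq] at hsum
  -- P_X ⊆ F '' S + C
  have hPXsub : convexHull ℝ (F '' X) + C ⊆ F '' S + C := by
    have hMsub : convexHull ℝ (F '' X) ⊆ F '' S + C := by
      apply convexHull_min _ hACconv
      rintro z ⟨x, hx, rfl⟩
      have h1 : F x ∈ F '' S := ⟨x, hXS hx, rfl⟩
      have := Set.add_mem_add h1 hC0
      simpa using this
    rintro p hp
    rw [Set.mem_add] at hp
    obtain ⟨u, hu, c, hc, rfl⟩ := hp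
    obtain ⟨a, ha, c', hc', heq⟩ := Set.mem_add.mp (hMsub hu)
    rw [← heq, add_assoc]
    exact Set.add_mem_add ha (hCadd _ hc' _ hc)
  have hyP : y ∈ closure (F '' S + C) :=
    closure_mono hPXsub (frontier_subset_closure hy)
  have hPclosed : IsClosed (closure (F '' S + C)) := isClosed_closure
  have hPconv : Convex ℝ (closure (F '' S + C)) := hACconv.closure
  by_cases hfr : y ∈ frontier (closure (F '' S + C))
  · left
    have hq0 : infDist (‖lift1 y‖⁻¹ • lift1 y) (ray (lift1 y)) = 0 :=
      infDist_zero_of_mem ⟨‖lift1 y‖⁻¹, by positivity, rfl⟩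
    refine ⟨y, hfr, _, rfl, ?_, ?_⟩
    · rw [hq0, zero_mul]; norm_num
    · rw [hq0, infDist_zero_of_mem hfr]
      simp
  · have hyint : y ∈ interior (closure (F '' S + C)) := by
      by_contra h
      apply hfr
      rw [← closure_diff_interior]
      exact ⟨subset_closure hyP, h⟩
    by_cases HA : ∃ nn ∈ frontier (closure (F '' S + C)),
        infDist (‖lift1 nn‖⁻¹ • lift1 nn) (ray (lift1 y)) * Real.sqrt (‖y‖ ^ 2 + 1) < 1
    · left
      obtain ⟨nn, hnn, hlt⟩ := HA
      exact ⟨nn, hnn, _, rfl, hlt,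
        le_trans (infDist_le_dist_of_mem hnn) (trig_bound y nn hlt)⟩
    · -- the "angular cone" Γ around y avoids the frontier, hence lies in the interior
      have hGammaFr : ∀ x : Em m, ‖y‖ * ‖lift1 x‖ < ⟪x, y⟫ + 1 →
          x ∉ frontier (closure (F '' S + C)) := by
        intro x hxΓ hxfr
        exact HA ⟨x, hxfr, gamma_small y x hxΓ⟩
      have hGammaOpen : IsOpen {x : Em m | ‖y‖ * ‖lift1 x‖ < ⟪x, y⟫ + 1} := by
        apply isOpen_lt
        · exact continuous_const.mul (continuous_norm.comp continuous_lift1)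
        · exact (continuous_id.inner continuous_const).add continuous_const
      have hGammaConv : Convex ℝ {x : Em m | ‖y‖ * ‖lift1 x‖ < ⟪x, y⟫ + 1} := by
        intro x₁ h₁ x₂ h₂ a b ha hb hab
        simp only [Set.mem_setOf_eq] at h₁ h₂ ⊢
        rcases eq_or_lt_of_le ha with ha0 | hapos
        · have hb1 : b = 1 := by linarith
          rw [← ha0, hb1, zero_smul, one_smul, zero_add]
          exact h₂
        rcases eq_or_lt_of_le hb with hb0 | hbpos
        · have ha1 : a = 1 := by linarith
          rw [← hb0, ha1, zero_smul, one_smul, add_zero]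
          exact h₁
        calc ‖y‖*‖lift1 (a•x₁+b•x₂)‖ = ‖y‖*‖a•lift1 x₁ + b•lift1 x₂‖ := by
              rw [lift1_combo a b hab]
          _ ≤ ‖y‖*(a*‖lift1 x₁‖ + b*‖lift1 x₂‖) := by
              apply mul_le_mul_of_nonneg_left _ (norm_nonneg y)
              calc ‖a•lift1 x₁ + b•lift1 x₂‖ ≤ ‖a•lift1 x₁‖ + ‖b•lift1 x₂‖ := norm_add_le _ _
                _ = a*‖lift1 x₁‖ + b*‖lift1 x₂‖ := by
                    rw [norm_smul, norm_smul, Real.norm_eq_abs, Real.norm_eq_abs,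
                      abs_of_pos hapos, abs_of_pos hbpos]
          _ = a*(‖y‖*‖lift1 x₁‖) + b*(‖y‖*‖lift1 x₂‖) := by ring
          _ < a*(⟪x₁,y⟫+1) + b*(⟪x₂,y⟫+1) :=
              add_lt_add (mul_lt_mul_of_pos_left h₁ hapos) (mul_lt_mul_of_pos_left h₂ hbpos)
          _ = ⟪a•x₁+b•x₂, y⟫ + 1 := by
              rw [inner_add_left, real_inner_smul_left, real_inner_smul_left]
              linear_combination hab
      have hyGamma : ‖y‖ * ‖lift1 y‖ < ⟪y, y⟫ + 1 := by
        rw [real_inner_self_eq_norm_sq]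
        nlinarith [norm_lift1_sq y, sq_nonneg (‖lift1 y‖ - ‖y‖), one_le_norm_lift1 y,
          norm_nonneg y]
      have hGammaSub : {x : Em m | ‖y‖ * ‖lift1 x‖ < ⟪x, y⟫ + 1}
          ⊆ interior (closure (F '' S + C)) := by
        apply IsPreconnected.subset_left_of_subset_union isOpen_interior
          hPclosed.isOpen_compl ?_ ?_ ?_ hGammaConv.isPreconnected
        · exact Set.disjoint_left.mpr fun a haint hac => hac (interior_subset haint)
        · intro x hx
          by_cases hxP : x ∈ closure (F '' S + C)
          · left
            by_contra hxi
            exact hGammaFr x hx ⟨subset_closure hxP, hxi⟩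
          · right; exact hxP
        · exact ⟨y, hyGamma, hyint⟩
      by_cases hy0 : y = 0
      · -- y = 0 is impossible: then 𝒫 = ℝ^m, contradicting the Hausdorff bound
        exfalso
        subst hy0
        have hIu : interior (closure (F '' S + C)) = univ := by
          apply Set.eq_univ_of_univ_subset
          intro x _
          apply hGammaSub
          simp
        have hPuniv : closure (F '' S + C) = univ := by
          apply Set.eq_univ_of_univ_subset
          rw [← hIu]
          exact interior_subset
        have hPXconv : Convex ℝ (convexHull ℝ (F '' X) + C) :=
          (convex_convexHull ℝ _).add hCconv
        obtain ⟨w, hw0, hwle⟩ := supporting_hyperplane hPXconv hy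
        have hu1 : ‖(‖w‖⁻¹ • w)‖ = 1 := norm_smul_inv_norm hw0
        have hule : ∀ z ∈ convexHull ℝ (F '' X) + C, ⟪‖w‖⁻¹ • w, z⟫ ≤ 0 := by
          intro z hz
          rw [real_inner_smul_left]
          exact mul_nonpos_of_nonneg_of_nonpos (by positivity) (hwle z hz)
        have hcone : coneHull (lift1 '' (convexHull ℝ (F '' X) + C))
            ⊆ {v : Em1 m | ⟪hor (‖w‖⁻¹ • w), v⟫ ≤ 0} := by
          rintro v ⟨k, cf, vf, hcf, hvf, rfl⟩
          simp only [Set.mem_setOf_eq, inner_sum]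
          apply Finset.sum_nonpos
          intro i _
          rw [real_inner_smul_right]
          obtain ⟨z, hz, hzf⟩ := hvf i
          rw [← hzf, inner_hor_lift1]
          exact mul_nonpos_of_nonneg_of_nonpos (hcf i) (hule z hz)
        have hhomPX : homog (convexHull ℝ (F '' X) + C)
            ⊆ {v : Em1 m | ⟪hor (‖w‖⁻¹ • w), v⟫ ≤ 0} :=
          closure_minimal hcone
            (isClosed_le (continuous_const.inner continuous_id) continuous_const)
        have hpmem : hor (‖w‖⁻¹ • w) ∈ homog (closure (F '' S + C)) := by
          rw [hPuniv]
          have hmemk : ∀ k : ℕ, (((k:ℝ)+1))⁻¹ • lift1 (((k:ℝ)+1) • (‖w‖⁻¹ • w))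
              ∈ coneHull (lift1 '' (univ : Set (Em m))) := fun k =>
            smul_mem_coneHull (by positivity) ⟨_, mem_univ _, rfl⟩
          have heqk : ∀ k : ℕ, (((k:ℝ)+1))⁻¹ • lift1 (((k:ℝ)+1) • (‖w‖⁻¹ • w))
              = hor (‖w‖⁻¹ • w) + (((k:ℝ)+1))⁻¹ • lift1 0 := fun k =>
            lift1_smul_aux ((k:ℝ)+1) (by positivity) _
          have htend : Tendsto (fun k : ℕ => (((k:ℝ)+1))⁻¹ • lift1 (((k:ℝ)+1) • (‖w‖⁻¹ • w)))
              atTop (nhds (hor (‖w‖⁻¹ • w))) := by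
            simp only [heqk]
            have heps : Tendsto (fun k : ℕ => (((k:ℝ)+1))⁻¹) atTop (nhds 0) := by
              have : ∀ k : ℕ, (((k:ℝ)+1))⁻¹ = 1/((k:ℝ)+1) := fun k => (one_div _).symm
              simp only [this]
              exact tendsto_eps
            have h2 := (heps.smul_const (lift1 (0 : Em m))).const_add (hor (‖w‖⁻¹ • w))
            simpa using h2
          exact mem_closure_of_tendsto htend (Eventually.of_forall hmemk)
        have hpB : hor (‖w‖⁻¹ • w) ∈ closedBall (0 : Em1 m) 1 := by
          rw [mem_closedBall, dist_zero_right, norm_hor, hu1]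
        have h0hom1 : (0 : Em1 m) ∈ homog (closure (F '' S + C)) := by
          unfold homog; exact subset_closure (zero_mem_coneHull _)
        have h0hom2 : (0 : Em1 m) ∈ homog (convexHull ℝ (F '' X) + C) := by
          unfold homog; exact subset_closure (zero_mem_coneHull _)
        have hs_ne : (homog (closure (F '' S + C)) ∩ closedBall 0 1).Nonempty :=
          ⟨0, h0hom1, mem_closedBall_self zero_le_one⟩
        have ht_ne : (homog (convexHull ℝ (F '' X) + C) ∩ closedBall 0 1).Nonempty :=
          ⟨0, h0hom2, mem_closedBall_self zero_le_one⟩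
        have hfin : EMetric.hausdorffEdist (homog (closure (F '' S + C)) ∩ closedBall 0 1)
            (homog (convexHull ℝ (F '' X) + C) ∩ closedBall 0 1) ≠ ⊤ :=
          hausdorffEdist_ne_top_of_nonempty_of_bounded hs_ne ht_ne
            (isBounded_closedBall.subset Set.inter_subset_right)
            (isBounded_closedBall.subset Set.inter_subset_right)
        have hid : infDist (hor (‖w‖⁻¹ • w))
            (homog (convexHull ℝ (F '' X) + C) ∩ closedBall 0 1) ≤ δ := by
          have hmemint : hor (‖w‖⁻¹ • w) ∈ homog (closure (F '' S + C)) ∩ closedBall 0 1 :=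
            ⟨hpmem, hpB⟩
          have h1 := infDist_le_hausdorffDist_of_mem hmemint hfin
          rw [hausdorffDist_comm] at h1
          exact le_trans h1 hXsol
        have hlow : (1:ℝ) ≤ infDist (hor (‖w‖⁻¹ • w))
            (homog (convexHull ℝ (F '' X) + C) ∩ closedBall 0 1) := by
          refine le_of_not_gt fun hlt => ?_
          obtain ⟨z, hz, hdz⟩ := (infDist_lt_iff ht_ne).mp hlt
          have hz0 : ⟪hor (‖w‖⁻¹ • w), z⟫ ≤ 0 := hhomPX hz.1
          have h1 : ⟪hor (‖w‖⁻¹ • w), hor (‖w‖⁻¹ • w) - z⟫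
              ≤ ‖hor (‖w‖⁻¹ • w)‖ * ‖hor (‖w‖⁻¹ • w) - z‖ := real_inner_le_norm _ _
          rw [inner_sub_right, real_inner_self_eq_norm_sq, norm_hor, hu1] at h1
          rw [dist_eq_norm] at hdz
          nlinarith [h1, hdz, hz0]
        linarith
      · -- y ≠ 0 : the ray through y lies in Γ ⊆ 𝒫, so y/‖y‖ is a recession direction
        right
        refine ⟨hy0, ?_⟩
        have hrpos : 0 < ‖y‖ := norm_pos_iff.mpr hy0
        have hrayP : ∀ s : ℝ, 0 ≤ s → y + s • (‖y‖⁻¹ • y) ∈ closure (F '' S + C) := by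
          intro s hs
          have hc : y + s • (‖y‖⁻¹ • y) = (1 + s * ‖y‖⁻¹) • y := by
            rw [smul_smul, add_smul, one_smul]
          rw [hc]
          have hc1 : 1 ≤ 1 + s * ‖y‖⁻¹ := by
            have : 0 ≤ s * ‖y‖⁻¹ := by positivity
            linarith
          apply interior_subset (hGammaSub ?_)
          show ‖y‖ * ‖lift1 ((1 + s * ‖y‖⁻¹) • y)‖ < ⟪(1 + s * ‖y‖⁻¹) • y, y⟫ + 1
          have hic : ⟪(1 + s * ‖y‖⁻¹) • y, y⟫ = (1 + s * ‖y‖⁻¹) * ‖y‖^2 := by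
            rw [real_inner_smul_left, real_inner_self_eq_norm_sq]
          have hL2 : (‖y‖ * ‖lift1 ((1 + s * ‖y‖⁻¹) • y)‖)^2
              = ‖y‖^2 * ((1 + s * ‖y‖⁻¹)^2 * ‖y‖^2 + 1) := by
            rw [mul_pow, norm_lift1_sq, norm_smul, Real.norm_eq_abs,
              abs_of_pos (by linarith : (0:ℝ) < 1 + s * ‖y‖⁻¹), mul_pow]
          rw [hic]
          exact ray_in_gamma_aux hc1 hrpos
            (mul_nonneg (norm_nonneg y) (norm_nonneg (lift1 ((1 + s * ‖y‖⁻¹) • y)))) hL2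
        have hrec : ‖y‖⁻¹ • y ∈ recCone (closure (F '' S + C)) :=
          mem_recCone_of_ray hPclosed hPconv hrayP
        rw [infDist_zero_of_mem hrec]
        positivity

end MainProof
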